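/- Let H be the complex Hilbert space ℓ² over the index set {ℓ ∈ ℕ : ℓ ≥ 1}, with standard orthonormal basis (e_ℓ)_{ℓ ≥ 1}, and adopt the convention e₀ := 0. Set λ_ℓ = ℓ(ℓ+1) and a_ℓ = √( (ℓ+1)(ℓ−1) / ((2ℓ+1)(2ℓ−1)) ) for ℓ ≥ 1, and let T : H → H be a continuous linear map satisfying, for every ℓ ≥ 1, T e_ℓ = (1 − 6/λ_ℓ)·(a_ℓ·e_{ℓ−1} + a_{ℓ+1}·e_{ℓ+1}). Then for every t ∈ ℝ, exp(itT) e₁ = e₁ − (2it/√5)·e₂; consequently the family {exp(itT) : t ∈ ℝ} is not uniformly bounded in operator norm: for every M > 0 there exists t ∈ ℝ with ‖exp(itT)‖ > M. -/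

import Mathlib

open Complex

/-- The standard orthonormal basis vectors of `ℓ²({ℓ ∈ ℕ : ℓ ≥ 1}; ℂ)`, with the
convention `e₀ := 0`. -/
noncomputable def e (ℓ : ℕ) : lp (fun _ : {ℓ : ℕ // 1 ≤ ℓ} => ℂ) 2 :=
  if h : 1 ≤ ℓ then lp.single 2 ⟨ℓ, h⟩ 1 else 0

/-- The eigenvalue `λ_ℓ = ℓ(ℓ+1)` of `−Δ` on the sphere. -/
noncomputable def lamCoef (ℓ : ℕ) : ℝ := (ℓ : ℝ) * ((ℓ : ℝ) + 1)

/-- The coefficient `a_ℓ = √((ℓ+1)(ℓ−1)/((2ℓ+1)(2ℓ−1)))` for `ℓ ≥ 1`. -/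
noncomputable def aCoef (ℓ : ℕ) : ℝ :=
  Real.sqrt ((((ℓ : ℝ) + 1) * ((ℓ : ℝ) - 1)) / ((2 * (ℓ : ℝ) + 1) * (2 * (ℓ : ℝ) - 1)))

lemma norm_e (ℓ : ℕ) (h : 1 ≤ ℓ) : ‖e ℓ‖ = 1 := by
  rw [e, dif_pos h]
  have := lp.norm_single (p := 2) (E := fun _ : {ℓ : ℕ // 1 ≤ ℓ} => ℂ)
    (by norm_num) ⟨ℓ, h⟩ (1 : ℂ)
  simpa using this

lemma aCoef_two : aCoef 2 = (Real.sqrt 5)⁻¹ := by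
  rw [aCoef]
  norm_num

/-- Equation (5.1.25): for the matrix operator
`T e_ℓ = (1 − 6/λ_ℓ)(a_ℓ e_{ℓ−1} + a_{ℓ+1} e_{ℓ+1})` (the representation of `M₁` at
`Ω = 0` for the zonal flow with stream function `cP₂(x₃)`),
`exp(itT) e₁ = e₁ − (2it/√5) e₂`, so `{exp(itT) : t ∈ ℝ}` is not uniformly bounded:
a weak linear instability. -/
theorem exp_smul_not_uniformly_bounded_P2_V1
    (T : lp (fun _ : {ℓ : ℕ // 1 ≤ ℓ} => ℂ) 2 →L[ℂ] lp (fun _ : {ℓ : ℕ // 1 ≤ ℓ} => ℂ) 2)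
    (hT : ∀ ℓ : ℕ, 1 ≤ ℓ →
      T (e ℓ) = ((1 : ℂ) - 6 / (lamCoef ℓ : ℂ)) •
        ((aCoef ℓ : ℂ) • e (ℓ - 1) + (aCoef (ℓ + 1) : ℂ) • e (ℓ + 1))) :
    (∀ t : ℝ, (NormedSpace.exp ((Complex.I * (t : ℂ)) • T)) (e 1) =
        e 1 - ((2 * Complex.I * (t : ℂ)) / (Real.sqrt 5 : ℂ)) • e 2) ∧
    ∀ M : ℝ, 0 < M → ∃ t : ℝ, M < ‖NormedSpace.exp ((Complex.I * (t : ℂ)) • T)‖ := by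
  have he0 : e 0 = 0 := by rw [e, dif_neg]; norm_num
  have hs5 : (0 : ℝ) < Real.sqrt 5 := Real.sqrt_pos.mpr (by norm_num)
  have hT1 : T (e 1) = (-(2 / (Real.sqrt 5 : ℂ))) • e 2 := by
    have h := hT 1 le_rfl
    rw [he0, smul_zero, zero_add] at h
    rw [h, smul_smul, aCoef_two]
    congr 1
    have : (lamCoef 1 : ℂ) = 2 := by norm_num [lamCoef]
    rw [this, show ((1:ℂ) - 6/2) = -2 by norm_num, div_eq_mul_inv]
    push_cast
    ring
  have hT2 : T (e 2) = 0 := by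
    have h := hT 2 (by norm_num)
    have : ((1 : ℂ) - 6 / (lamCoef 2 : ℂ)) = 0 := by norm_num [lamCoef]
    rw [this, zero_smul] at h
    exact h
  have main : ∀ t : ℝ, (NormedSpace.exp ((Complex.I * (t : ℂ)) • T)) (e 1) =
      e 1 - ((2 * Complex.I * (t : ℂ)) / (Real.sqrt 5 : ℂ)) • e 2 := by
    intro t
    set S := (Complex.I * (t : ℂ)) • T with hS
    have hSe1 : S (e 1) = (Complex.I * (t : ℂ) * (-(2 / (Real.sqrt 5 : ℂ)))) • e 2 := by
      rw [hS, ContinuousLinearMap.smul_apply, hT1, smul_smul]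
    have hSe2 : S (e 2) = 0 := by
      rw [hS, ContinuousLinearMap.smul_apply, hT2, smul_zero]
    have hpow : ∀ n : ℕ, 2 ≤ n → (S ^ n) (e 1) = 0 := by
      intro n hn
      induction n with
      | zero => omega
      | succ m ih =>
        rcases Nat.lt_or_ge m 2 with hm | hm
        · interval_cases m
          · omega
          · rw [pow_succ, ContinuousLinearMap.mul_apply, pow_one, hSe1, map_smul, hSe2,
              smul_zero]
        · rw [pow_succ', ContinuousLinearMap.mul_apply, ih hm, map_zero]
    have happ : (NormedSpace.exp S) (e 1)
        = ∑' n : ℕ, ((n.factorial : ℂ)⁻¹ • (S ^ n)) (e 1) := by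
      rw [NormedSpace.exp_eq_tsum (𝕂 := ℂ)]
      exact (ContinuousLinearMap.apply ℂ _ (e 1)).map_tsum
        (NormedSpace.expSeries_summable' (𝕂 := ℂ) S)
    have hterm : ∀ n : ℕ, n ∉ ({0, 1} : Finset ℕ) →
        ((n.factorial : ℂ)⁻¹ • (S ^ n)) (e 1) = 0 := by
      intro n hn
      simp only [Finset.mem_insert, Finset.mem_singleton] at hn
      rw [ContinuousLinearMap.smul_apply, hpow n (by omega), smul_zero]
    rw [happ, tsum_eq_sum hterm]
    rw [Finset.sum_insert (by norm_num), Finset.sum_singleton]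
    simp only [ContinuousLinearMap.smul_apply, pow_zero, pow_one,
      ContinuousLinearMap.one_apply, Nat.factorial_zero, Nat.factorial_one, Nat.cast_one,
      inv_one, one_smul, hSe1, smul_smul]
    rw [sub_eq_add_neg, ← neg_smul]
    congr 2
    ring
  refine ⟨main, ?_⟩
  intro M hM
  set t : ℝ := Real.sqrt 5 * (M + 2) / 2 with ht
  have ht0 : 0 ≤ t := by positivity
  refine ⟨t, ?_⟩
  have h1 : ‖(NormedSpace.exp ((Complex.I * (t : ℂ)) • T)) (e 1)‖
      ≤ ‖NormedSpace.exp ((Complex.I * (t : ℂ)) • T)‖ := by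
    have := (NormedSpace.exp ((Complex.I * (t : ℂ)) • T)).le_opNorm (e 1)
    rwa [norm_e 1 le_rfl, mul_one] at this
  have h2 : ‖((2 * Complex.I * (t : ℂ)) / (Real.sqrt 5 : ℂ))‖ = M + 2 := by
    have : ‖((2 * Complex.I * (t : ℂ)) / (Real.sqrt 5 : ℂ))‖ = 2 * t / Real.sqrt 5 := by
      simp [norm_div, norm_mul, Complex.norm_real, _root_.abs_of_nonneg ht0, _root_.abs_of_nonneg hs5.le]
    rw [this, ht]
    field_simp
  have h3 : M + 1 ≤ ‖(NormedSpace.exp ((Complex.I * (t : ℂ)) • T)) (e 1)‖ := by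
    rw [main t]
    have hge := norm_sub_norm_le
      (((2 * Complex.I * (t : ℂ)) / (Real.sqrt 5 : ℂ)) • e 2) (e 1)
    rw [norm_smul, h2, norm_e 2 (by norm_num), mul_one, norm_e 1 le_rfl, norm_sub_rev] at hge
    linarith
  linarith
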